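/- Let m ≥ 3 be odd and n = (p_1 ⋯ p_m)^α for distinct primes p_i and α ≥ 1. Then the clique number and chromatic number of G(Z/nZ) both equal (∑_{i=0}^{⌊m/2⌋} C(m,i) α^{m-i}) − 1. -/

import Mathlib

/-- The intersection graph of ideals of a ring: vertices are the proper
non-trivial ideals, two distinct ideals are adjacent iff their intersection
is non-zero. -/
def interGraph (R : Type*) [CommRing R] : SimpleGraph {I : Ideal R // I ≠ ⊥ ∧ I ≠ ⊤} where
  Adj I J := I ≠ J ∧ I.1 ⊓ J.1 ≠ ⊥
  symm := ⟨by rintro I J ⟨h1, h2⟩; exact ⟨h1.symm, by rwa [inf_comm]⟩⟩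
  loopless := ⟨by rintro I ⟨h, -⟩; exact h rfl⟩

/-- Degree of a vertex. -/
noncomputable def vdeg {V : Type*} (G : SimpleGraph V) (v : V) : ℕ :=
  Nat.card {w // G.Adj v w}

/-- Maximum degree. -/
noncomputable def maxDeg {V : Type*} (G : SimpleGraph V) : ℕ := ⨆ v, vdeg G v

/-- Edge chromatic number (chromatic index), as the chromatic number of the line graph. -/
noncomputable def edgeChrom {V : Type*} (G : SimpleGraph V) : ℕ∞ :=
  (SimpleGraph.lineGraph G).chromaticNumber

/-- The intersection graph of non-empty proper subsets of `Fin m`. -/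
def subsetGraph (m : ℕ) : SimpleGraph {S : Finset (Fin m) // S ≠ ∅ ∧ S ≠ Finset.univ} where
  Adj S T := S ≠ T ∧ (S.1 ∩ T.1).Nonempty
  symm := ⟨by rintro S T ⟨h1, h2⟩; exact ⟨h1.symm, by rwa [Finset.inter_comm]⟩⟩
  loopless := ⟨by rintro S ⟨h, -⟩; exact h rfl⟩


namespace Stmt8Aux


instance zmodPIR (n : ℕ) : IsPrincipalIdealRing (ZMod n) :=
  IsPrincipalIdealRing.of_surjective (Int.castRingHom (ZMod n)) ZMod.intCast_surjective

variable {n : ℕ} [NeZero n]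

/-- The ideal of `ZMod n` of multiples of `d`, for `d ∣ n`. -/
def dIdeal {d : ℕ} (h : d ∣ n) : Ideal (ZMod n) :=
  RingHom.ker (ZMod.castHom h (ZMod d))

lemma mem_dIdeal {d : ℕ} (h : d ∣ n) (x : ZMod n) : x ∈ dIdeal h ↔ d ∣ x.val := by
  rw [dIdeal, RingHom.mem_ker, ZMod.castHom_apply, ← ZMod.natCast_val,
    ZMod.natCast_eq_zero_iff]

lemma natCast_mem_dIdeal {d : ℕ} (h : d ∣ n) : (d : ZMod n) ∈ dIdeal h := by
  rw [mem_dIdeal, ZMod.val_natCast]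
  exact (Nat.dvd_mod_iff h).2 dvd_rfl

lemma dIdeal_inj {d e : ℕ} (hd : d ∣ n) (he : e ∣ n) (h : dIdeal hd = dIdeal he) : d = e := by
  have h1 : (e : ZMod n) ∈ dIdeal hd := h ▸ natCast_mem_dIdeal he
  have h2 : (d : ZMod n) ∈ dIdeal he := h ▸ natCast_mem_dIdeal hd
  rw [mem_dIdeal, ZMod.val_natCast, Nat.dvd_mod_iff hd] at h1
  rw [mem_dIdeal, ZMod.val_natCast, Nat.dvd_mod_iff he] at h2
  exact Nat.dvd_antisymm h1 h2

lemma dIdeal_surj (I : Ideal (ZMod n)) : ∃ (d : ℕ) (h : d ∣ n), I = dIdeal h := by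
  obtain ⟨x, hx⟩ := Submodule.IsPrincipal.principal I
  refine ⟨Nat.gcd x.val n, Nat.gcd_dvd_right _ _, le_antisymm ?_ ?_⟩
  · rw [hx, Submodule.span_le]
    rintro y hy
    simp only [Set.mem_singleton_iff] at hy
    subst hy
    rw [SetLike.mem_coe, mem_dIdeal]
    exact Nat.gcd_dvd_left _ _
  · -- dIdeal ≤ span {x}
    intro y hy
    rw [mem_dIdeal] at hy
    have hg : ((Nat.gcd x.val n : ℕ) : ZMod n) ∈ Ideal.span {x} := by
      have hb := Nat.gcd_eq_gcd_ab x.val n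
      have key : ((Nat.gcd x.val n : ℕ) : ZMod n) = x * (Nat.gcdA x.val n : ZMod n) := by
        have h2 : (((Nat.gcd x.val n : ℕ) : ℤ) : ZMod n)
            = ((x.val * Nat.gcdA x.val n + n * Nat.gcdB x.val n : ℤ) : ZMod n) := by rw [← hb]
        push_cast at h2
        simpa [ZMod.natCast_val, ZMod.cast_id, ZMod.natCast_self] using h2
      rw [key]
      exact Ideal.mul_mem_right _ _ (Ideal.subset_span rfl)
    have hyv : y = ((y.val / Nat.gcd x.val n) : ℕ) * ((Nat.gcd x.val n : ℕ) : ZMod n) := by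
      rw [← Nat.cast_mul, Nat.div_mul_cancel hy]
      simp [ZMod.natCast_val, ZMod.cast_id]
    rw [hx] at *
    rw [hyv]
    exact Ideal.mul_mem_left _ _ hg

lemma dIdeal_inf {d e : ℕ} (hd : d ∣ n) (he : e ∣ n) :
    dIdeal hd ⊓ dIdeal he = dIdeal (Nat.lcm_dvd hd he) := by
  ext x
  simp only [Submodule.mem_inf, mem_dIdeal]
  exact (Nat.lcm_dvd_iff).symm

lemma dIdeal_n : dIdeal (dvd_refl n) = ⊥ := by
  ext x
  simp only [mem_dIdeal, Ideal.mem_bot]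
  constructor
  · intro h
    have := Nat.eq_zero_of_dvd_of_lt h (ZMod.val_lt x)
    · exact ZMod.val_eq_zero x |>.1 (by omega)
  · rintro rfl; simp
lemma dIdeal_one : dIdeal (one_dvd n) = ⊤ := by
  ext x; simp [mem_dIdeal]




open Finset

variable {m α : ℕ}



variable {m : ℕ} {p : Fin m → ℕ} (hp : ∀ i, (p i).Prime) (hinj : Function.Injective p)

/-- the divisor with exponent vector β -/
def gdiv (p : Fin m → ℕ) (β : Fin m → ℕ) : ℕ := ∏ i, p i ^ (β i)

include hp in
lemma gdiv_ne_zero (β : Fin m → ℕ) : gdiv p β ≠ 0 := by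
  rw [gdiv, Finset.prod_ne_zero_iff]
  exact fun i _ => pow_ne_zero _ (hp i).pos.ne'

include hp in
lemma factorization_gdiv (β : Fin m → ℕ) :
    (gdiv p β).factorization = ∑ i, Finsupp.single (p i) (β i) := by
  rw [gdiv, Nat.factorization_prod (fun i _ => pow_ne_zero _ (hp i).pos.ne')]
  refine Finset.sum_congr rfl fun i _ => ?_
  rw [(hp i).factorization_pow]

include hp hinj in
lemma factorization_gdiv_apply (β : Fin m → ℕ) (i : Fin m) :
    (gdiv p β).factorization (p i) = β i := by
  rw [factorization_gdiv hp, Finsupp.finset_sum_apply]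
  rw [Finset.sum_eq_single i]
  · simp
  · intro j _ hj
    rw [Finsupp.single_apply, if_neg (fun h => hj (hinj h))]
  · simp

include hp hinj in
lemma gdiv_inj {β γ : Fin m → ℕ} (h : gdiv p β = gdiv p γ) : β = γ := by
  funext i
  rw [← factorization_gdiv_apply hp hinj β i, ← factorization_gdiv_apply hp hinj γ i, h]

lemma gdiv_dvd {α : ℕ} {β : Fin m → ℕ} (hβ : ∀ i, β i ≤ α) :
    gdiv p β ∣ gdiv p (fun _ => α) :=
  Finset.prod_dvd_prod_of_dvd _ _ (fun i _ => pow_dvd_pow _ (hβ i))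

include hp hinj in
lemma gdiv_surj {α d : ℕ} (hd : d ∣ gdiv p (fun _ => α)) :
    ∃ β : Fin m → ℕ, (∀ i, β i ≤ α) ∧ gdiv p β = d := by
  have hn0 : gdiv p (fun _ => α) ≠ 0 := gdiv_ne_zero hp _
  have hd0 : d ≠ 0 := fun h => hn0 (by simpa [h] using hd)
  refine ⟨fun i => d.factorization (p i), fun i => ?_, ?_⟩
  · have hle := (Nat.factorization_le_iff_dvd hd0 hn0).2 hd
    have := hle (p i)
    rwa [factorization_gdiv_apply hp hinj] at this
  · -- gdiv p (fun i => d.factorization (p i)) = d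
    have hsupp : d.factorization.support ⊆ Finset.univ.image p := by
      intro q hq
      rw [Nat.support_factorization] at hq
      have hq' : q.Prime := Nat.prime_of_mem_primeFactors hq
      have hqd : q ∣ d := Nat.dvd_of_mem_primeFactors hq
      have hqn : q ∣ gdiv p (fun _ => α) := hqd.trans hd
      rw [gdiv] at hqn
      obtain ⟨i, _, hi⟩ := hq'.prime.exists_mem_finset_dvd hqn
      have : q = p i := ((Nat.prime_dvd_prime_iff_eq hq' (hp i)).1 (hq'.dvd_of_dvd_pow hi))
      rw [this]
      exact Finset.mem_image_of_mem p (Finset.mem_univ i)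
    conv_rhs => rw [← Nat.factorization_prod_pow_eq_self hd0]
    rw [Finsupp.prod_of_support_subset _ hsupp _ (fun q _ => pow_zero q)]
    rw [gdiv, Finset.prod_image (fun i _ j _ h => hinj h)]

include hp hinj in
lemma gdiv_lcm (β γ : Fin m → ℕ) :
    Nat.lcm (gdiv p β) (gdiv p γ) = gdiv p (fun i => max (β i) (γ i)) := by
  have h1 : Nat.lcm (gdiv p β) (gdiv p γ) ≠ 0 :=
    Nat.lcm_ne_zero (gdiv_ne_zero hp _) (gdiv_ne_zero hp _)
  apply Nat.factorization_inj (by simpa using h1) (by simpa using gdiv_ne_zero hp (fun i => max (β i) (γ i)))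
  rw [Nat.factorization_lcm (gdiv_ne_zero hp _) (gdiv_ne_zero hp _)]
  rw [factorization_gdiv hp, factorization_gdiv hp, factorization_gdiv hp]
  ext q
  rw [Finsupp.sup_apply, Finsupp.finset_sum_apply, Finsupp.finset_sum_apply, Finsupp.finset_sum_apply]
  by_cases hq : ∃ i, p i = q
  · obtain ⟨i, rfl⟩ := hq
    have hrw : ∀ β' : Fin m → ℕ, (∑ j, (Finsupp.single (p j) (β' j)) (p i)) = β' i := by
      intro β'
      rw [Finset.sum_eq_single i]
      · simp
      · intro j _ hj
        rw [Finsupp.single_apply, if_neg (fun h => hj (hinj h))]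
      · simp
    rw [hrw, hrw, hrw]
  · push_neg at hq
    have hrw : ∀ β' : Fin m → ℕ, (∑ j, (Finsupp.single (p j) (β' j)) q) = 0 := by
      intro β'
      refine Finset.sum_eq_zero fun j _ => ?_
      rw [Finsupp.single_apply, if_neg (hq j)]
    rw [hrw, hrw, hrw]
    simp


/-- zero set: coordinates where β is `Fin.last α` (i.e. the component ideal is zero) -/
def zsF (β : Fin m → Fin (α+1)) : Finset (Fin m) :=
  Finset.univ.filter (fun i => β i = Fin.last α)

lemma mem_zsF {β : Fin m → Fin (α+1)} {i : Fin m} : i ∈ zsF β ↔ β i = Fin.last α := by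
  simp [zsF]

lemma card_fiber_zsF (Z : Finset (Fin m)) :
    (univ.filter fun β : Fin m → Fin (α+1) => zsF β = Z).card = α ^ (m - Z.card) := by
  have hset : (univ.filter fun β : Fin m → Fin (α+1) => zsF β = Z) =
      Fintype.piFinset (fun i => if i ∈ Z then {Fin.last α} else ({Fin.last α}ᶜ : Finset (Fin (α+1)))) := by
    ext β
    simp only [mem_filter, mem_univ, true_and, Fintype.mem_piFinset]
    constructor
    · rintro rfl i
      by_cases hi : i ∈ zsF β
      · rw [if_pos hi]
        simpa using mem_zsF.1 hi
      · rw [if_neg hi]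
        simpa using fun h => hi (mem_zsF.2 h)
    · intro h
      ext i
      rw [mem_zsF]
      by_cases hi : i ∈ Z
      · have := h i
        rw [if_pos hi] at this
        simp only [mem_singleton] at this
        simp [this, hi]
      · have := h i
        rw [if_neg hi] at this
        simp only [mem_compl, mem_singleton] at this
        simp [this, hi]
  rw [hset, Fintype.card_piFinset]
  have hcongr : ∀ i : Fin m,
      ((if i ∈ Z then {Fin.last α} else ({Fin.last α}ᶜ : Finset (Fin (α+1)))).card : ℕ)
        = if i ∈ Z then 1 else α := by
    intro i
    by_cases hi : i ∈ Z <;> simp [hi, Finset.card_compl]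
  rw [Finset.prod_congr rfl (fun i _ => hcongr i)]
  rw [← Finset.prod_filter_mul_prod_filter_not univ (· ∈ Z)]
  rw [Finset.prod_congr rfl (fun i hi => if_pos (mem_filter.1 hi).2),
    Finset.prod_congr rfl (fun i hi => if_neg (mem_filter.1 hi).2)]
  rw [Finset.prod_const_one, Finset.prod_const, one_mul]
  congr 1
  have : (filter (fun i => i ∉ Z) univ) = Zᶜ := by
    ext i; simp
  rw [this, Finset.card_compl, Fintype.card_fin]

lemma sum_small (k : ℕ) :
    ∑ Z ∈ univ.filter (fun Z : Finset (Fin m) => Z.card ≤ k), α ^ (m - Z.card)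
      = ∑ i ∈ Finset.range (k+1), m.choose i * α ^ (m - i) := by
  rw [← Finset.sum_fiberwise_of_maps_to (g := Finset.card)
    (t := Finset.range (k+1)) (fun Z hZ => by
      simp only [mem_filter] at hZ
      exact Finset.mem_range.2 (Nat.lt_succ_of_le hZ.2))]
  refine Finset.sum_congr rfl fun i hi => ?_
  have hi' : i ≤ k := Nat.lt_succ_iff.1 (Finset.mem_range.1 hi)
  have hfil : ((univ.filter (fun Z : Finset (Fin m) => Z.card ≤ k)).filter
      (fun Z => Z.card = i)) = Finset.powersetCard i univ := by
    ext Z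
    simp only [mem_filter, mem_univ, true_and, Finset.mem_powersetCard]
    constructor
    · rintro ⟨_, h⟩; exact ⟨Finset.subset_univ _, h⟩
    · rintro ⟨_, h⟩; exact ⟨h ▸ hi', h⟩
  rw [hfil]
  rw [Finset.sum_congr rfl (fun Z hZ => by
    rw [(Finset.mem_powersetCard.1 hZ).2])]
  rw [Finset.sum_const, Finset.card_powersetCard, Finset.card_univ, Fintype.card_fin, smul_eq_mul]

lemma count_N :
    (univ.filter fun β : Fin m → Fin (α+1) => (zsF β).card ≤ m/2).card
      = ∑ i ∈ Finset.range (m/2+1), m.choose i * α ^ (m - i) := by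
  rw [Finset.card_eq_sum_card_fiberwise (f := zsF)
    (t := univ.filter (fun Z : Finset (Fin m) => Z.card ≤ m/2))
    (fun β hβ => by
      simp only [coe_filter, Finset.mem_coe, mem_filter, mem_univ, true_and, Set.mem_setOf_eq] at hβ ⊢
      exact hβ)]
  rw [← sum_small (m/2)]
  refine Finset.sum_congr rfl fun Z hZ => ?_
  simp only [mem_filter, mem_univ, true_and] at hZ
  rw [← card_fiber_zsF Z]
  congr 1
  ext β
  simp only [mem_filter, mem_univ, true_and]
  constructor
  · rintro ⟨_, h⟩; exact h
  · rintro rfl; exact ⟨hZ, rfl⟩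






/-- weight of a support set -/
def wS (α : ℕ) (S : Finset (Fin m)) : ℕ := if S = univ then α ^ S.card - 1 else α ^ S.card

lemma intersecting_bound (hα : 1 ≤ α) (hodd : Odd m)
    (𝒮 : Finset (Finset (Fin m)))
    (hne : ∀ S ∈ 𝒮, S.Nonempty)
    (hint : ∀ S ∈ 𝒮, ∀ T ∈ 𝒮, S ≠ T → (S ∩ T).Nonempty) :
    ∑ S ∈ 𝒮, wS α S ≤ ∑ S ∈ univ.filter (fun S : Finset (Fin m) => m/2 < S.card), wS α S := by
  have hm2 : m % 2 = 1 := Nat.odd_iff.1 hodd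
  have hcompl : ∀ S ∈ 𝒮, Sᶜ ∉ 𝒮 := by
    intro S hS hc
    have hSne : S ≠ Sᶜ := by
      intro h
      obtain ⟨i, hi⟩ := hne S hS
      have : i ∈ Sᶜ := h ▸ hi
      simp only [Finset.mem_compl] at this
      exact this hi
    have := hint S hS Sᶜ hc hSne
    simp at this
  set Big := univ.filter (fun S : Finset (Fin m) => m/2 < S.card) with hBig
  rw [← Finset.sum_filter_add_sum_filter_not 𝒮 (fun S => m/2 < S.card) (wS α)]
  have hsmall_le : ∀ S ∈ 𝒮.filter (fun S => ¬ m/2 < S.card), wS α S ≤ wS α Sᶜ := by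
    intro S hSf
    rw [mem_filter] at hSf
    obtain ⟨hS, hSc⟩ := hSf
    push_neg at hSc
    have hSu : S ≠ univ := by
      intro h
      rw [h, Finset.card_univ, Fintype.card_fin] at hSc
      omega
    have hScu : Sᶜ ≠ univ := by
      intro h
      obtain ⟨i, hi⟩ := hne S hS
      have : i ∈ Sᶜ := h ▸ Finset.mem_univ i
      simp only [Finset.mem_compl] at this
      exact this hi
    rw [wS, wS, if_neg hSu, if_neg hScu]
    apply Nat.pow_le_pow_right hα
    rw [Finset.card_compl, Fintype.card_fin]
    omega
  calc ∑ S ∈ 𝒮.filter (fun S => m/2 < S.card), wS α S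
        + ∑ S ∈ 𝒮.filter (fun S => ¬ m/2 < S.card), wS α S
      ≤ ∑ S ∈ 𝒮.filter (fun S => m/2 < S.card), wS α S
        + ∑ S ∈ 𝒮.filter (fun S => ¬ m/2 < S.card), wS α Sᶜ := by
        exact Nat.add_le_add_left (Finset.sum_le_sum hsmall_le) _
    _ = ∑ S ∈ 𝒮.filter (fun S => m/2 < S.card), wS α S
        + ∑ T ∈ (𝒮.filter (fun S => ¬ m/2 < S.card)).image compl, wS α T := by
        rw [Finset.sum_image (fun x _ y _ h => compl_injective h)]
    _ = ∑ S ∈ (𝒮.filter (fun S => m/2 < S.card)) ∪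
            ((𝒮.filter (fun S => ¬ m/2 < S.card)).image compl), wS α S := by
        rw [Finset.sum_union]
        rw [Finset.disjoint_left]
        intro S hS1 hS2
        rw [Finset.mem_image] at hS2
        obtain ⟨T, hT, rfl⟩ := hS2
        rw [mem_filter] at hS1 hT
        exact hcompl T hT.1 hS1.1
    _ ≤ ∑ S ∈ Big, wS α S := by
        apply Finset.sum_le_sum_of_subset
        intro S hS
        rw [Finset.mem_union] at hS
        rw [hBig, mem_filter]
        refine ⟨Finset.mem_univ S, ?_⟩
        rcases hS with hS | hS
        · exact (mem_filter.1 hS).2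
        · rw [Finset.mem_image] at hS
          obtain ⟨T, hT, rfl⟩ := hS
          rw [mem_filter] at hT
          have := hT.2
          rw [Finset.card_compl, Fintype.card_fin]
          omega

lemma sum_Big (hα : 1 ≤ α) (hodd : Odd m) (hm : 1 ≤ m) :
    ∑ S ∈ univ.filter (fun S : Finset (Fin m) => m/2 < S.card), wS α S
      = (∑ i ∈ Finset.range (m/2+1), m.choose i * α ^ (m - i)) - 1 := by
  have hm2 : m % 2 = 1 := Nat.odd_iff.1 hodd
  set Big := univ.filter (fun S : Finset (Fin m) => m/2 < S.card) with hBig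
  have huniv : (univ : Finset (Fin m)) ∈ Big := by
    rw [hBig, mem_filter]
    refine ⟨Finset.mem_univ _, ?_⟩
    rw [Finset.card_univ, Fintype.card_fin]
    omega
  have hsum_pow : ∑ S ∈ Big, α ^ S.card
      = ∑ i ∈ Finset.range (m/2+1), m.choose i * α ^ (m - i) := by
    rw [← sum_small (m/2)]
    apply Finset.sum_nbij' (i := fun S => Sᶜ) (j := fun Z => Zᶜ)
    · intro S hS
      rw [hBig, mem_filter] at hS
      rw [mem_filter]
      refine ⟨Finset.mem_univ _, ?_⟩
      rw [Finset.card_compl, Fintype.card_fin]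
      omega
    · intro Z hZ
      rw [mem_filter] at hZ
      rw [hBig, mem_filter]
      refine ⟨Finset.mem_univ _, ?_⟩
      rw [Finset.card_compl, Fintype.card_fin]
      have := hZ.2
      have hcle : Z.card ≤ m := by
        have := Finset.card_le_univ Z
        simpa using this
      omega
    · intro S _; exact compl_compl S
    · intro Z _; exact compl_compl Z
    · intro S _
      rw [Finset.card_compl, Fintype.card_fin]
      have hcle : S.card ≤ m := by
        have := Finset.card_le_univ S
        simpa using this
      congr 1
      omega
  have h1 : ∑ S ∈ Big, wS α S + 1 = ∑ S ∈ Big, α ^ S.card := by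
    rw [← Finset.sum_erase_add Big _ huniv, ← Finset.sum_erase_add Big (fun S => α ^ S.card) huniv]
    have he : ∀ S ∈ Big.erase univ, wS α S = α ^ S.card := by
      intro S hS
      rw [wS, if_neg (Finset.ne_of_mem_erase hS)]
    rw [Finset.sum_congr rfl he]
    have : wS α (univ : Finset (Fin m)) = α ^ m - 1 := by
      rw [wS, if_pos rfl, Finset.card_univ, Fintype.card_fin]
    rw [this, Finset.card_univ, Fintype.card_fin]
    have : 1 ≤ α ^ m := Nat.one_le_pow _ _ hα
    omega
  omega


def lastT (m α : ℕ) : Fin m → Fin (α+1) := fun _ => Fin.last α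
def zeroT (m α : ℕ) : Fin m → Fin (α+1) := fun _ => 0

/-- vertex type of the model graph -/
def GV (m α : ℕ) := {β : Fin m → Fin (α+1) // β ≠ lastT m α ∧ β ≠ zeroT m α}

instance (m α : ℕ) : Fintype (GV m α) := by unfold GV; infer_instance
instance (m α : ℕ) : DecidableEq (GV m α) := by unfold GV; infer_instance

/-- the model graph -/
def G' (m α : ℕ) : SimpleGraph (GV m α) where
  Adj v w := v ≠ w ∧ ∃ i, v.1 i ≠ Fin.last α ∧ w.1 i ≠ Fin.last α
  symm := ⟨by rintro v w ⟨h1, i, h2, h3⟩; exact ⟨h1.symm, i, h3, h2⟩⟩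
  loopless := ⟨by rintro v ⟨h, -⟩; exact h rfl⟩

lemma zsF_lastT : zsF (lastT m α) = univ := by
  ext i; simp [mem_zsF, lastT]

lemma zsF_zeroT (hα : 1 ≤ α) : zsF (zeroT m α) = ∅ := by
  ext i
  simp only [mem_zsF, zeroT, Finset.notMem_empty, iff_false]
  intro h
  have := congrArg Fin.val h
  simp [Fin.val_last] at this
  omega

lemma card_zsF_le (β : Fin m → Fin (α+1)) : (zsF β).card ≤ m := by
  have := Finset.card_le_univ (zsF β)
  simpa using this

/-- the distinguished clique -/
def KClq (m α : ℕ) : Finset (GV m α) :=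
  univ.filter (fun v => (zsF v.1).card ≤ m/2)

lemma KClq_isClique (hodd : Odd m) : (G' m α).IsClique (KClq m α) := by
  have hm2 : m % 2 = 1 := Nat.odd_iff.1 hodd
  intro v hv w hw hvw
  simp only [KClq, Finset.coe_filter, Set.mem_setOf_eq, mem_univ, true_and] at hv hw
  refine ⟨hvw, ?_⟩
  by_contra hcon
  push_neg at hcon
  have hsub : (univ : Finset (Fin m)) ⊆ zsF v.1 ∪ zsF w.1 := by
    intro i _
    by_cases h2 : v.1 i = Fin.last α
    · exact Finset.mem_union_left _ (mem_zsF.2 h2)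
    · exact Finset.mem_union_right _ (mem_zsF.2 (hcon i h2))
  have := Finset.card_le_card hsub
  have hcu := Finset.card_union_le (zsF v.1) (zsF w.1)
  simp only [Finset.card_univ, Fintype.card_fin] at this
  omega

lemma card_KClq (hα : 1 ≤ α) (hodd : Odd m) :
    (KClq m α).card = (∑ i ∈ Finset.range (m/2+1), m.choose i * α ^ (m - i)) - 1 := by
  have hm2 : m % 2 = 1 := Nat.odd_iff.1 hodd
  rw [← count_N]
  have hzmem : zeroT m α ∈ (univ.filter fun β : Fin m → Fin (α+1) => (zsF β).card ≤ m/2) := by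
    rw [mem_filter]
    exact ⟨mem_univ _, by rw [zsF_zeroT hα]; simp⟩
  rw [← Finset.card_erase_of_mem hzmem]
  apply Finset.card_bij (i := fun v _ => v.1)
  · intro v hv
    rw [Finset.mem_erase, mem_filter]
    rw [KClq, mem_filter] at hv
    exact ⟨v.2.2, mem_univ _, hv.2⟩
  · intro v _ w _ h
    exact Subtype.ext h
  · intro β hβ
    rw [Finset.mem_erase, mem_filter] at hβ
    have hlast : β ≠ lastT m α := by
      intro h
      rw [h, zsF_lastT, Finset.card_univ, Fintype.card_fin] at hβ
      omega
    refine ⟨⟨β, hlast, hβ.1⟩, ?_, rfl⟩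
    unfold KClq
    exact mem_filter.2 ⟨mem_univ _, hβ.2.2⟩

lemma clique_card_le (hα : 1 ≤ α) (hodd : Odd m) (hm : 3 ≤ m)
    (s : Finset (GV m α)) (hs : (G' m α).IsClique s) :
    s.card ≤ (∑ i ∈ Finset.range (m/2+1), m.choose i * α ^ (m - i)) - 1 := by
  have hm2 : m % 2 = 1 := Nat.odd_iff.1 hodd
  set f : GV m α → Finset (Fin m) := fun v => (zsF v.1)ᶜ with hf
  set 𝒮 := s.image f with h𝒮
  rw [Finset.card_eq_sum_card_fiberwise (f := f) (t := 𝒮)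
    (fun v hv => Finset.mem_image_of_mem f hv)]
  have hfiber : ∀ S ∈ 𝒮, (s.filter (fun v => f v = S)).card ≤ wS α S := by
    intro S hS
    have hsub : (s.filter (fun v => f v = S)).image (fun v => v.1)
        ⊆ univ.filter (fun β : Fin m → Fin (α+1) => zsF β = Sᶜ) := by
      intro β hβ
      rw [Finset.mem_image] at hβ
      obtain ⟨v, hv, rfl⟩ := hβ
      rw [mem_filter] at hv ⊢
      refine ⟨mem_univ _, ?_⟩
      rw [← hv.2, hf]
      simp
    have hcardim : (s.filter (fun v => f v = S)).card
        = ((s.filter (fun v => f v = S)).image (fun v => v.1)).card := by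
      exact (Finset.card_image_of_injOn (fun x _ y _ h => Subtype.ext h)).symm
    by_cases hSu : S = univ
    · subst hSu
      have hsub2 : (s.filter (fun v => f v = univ)).image (fun v => v.1)
          ⊆ (univ.filter (fun β : Fin m → Fin (α+1) => zsF β = univᶜ)).erase (zeroT m α) := by
        intro β hβ
        rw [Finset.mem_erase]
        refine ⟨?_, hsub hβ⟩
        rw [Finset.mem_image] at hβ
        obtain ⟨v, _, rfl⟩ := hβ
        exact v.2.2
      have := Finset.card_le_card hsub2
      rw [wS, if_pos rfl, Finset.card_univ, Fintype.card_fin]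
      rw [hcardim]
      have hz : zeroT m α ∈ univ.filter (fun β : Fin m → Fin (α+1) => zsF β = univᶜ) := by
        rw [mem_filter]
        refine ⟨mem_univ _, by rw [zsF_zeroT hα]; simp⟩
      rw [Finset.card_erase_of_mem hz, card_fiber_zsF] at this
      simpa using this
    · rw [wS, if_neg hSu]
      rw [hcardim]
      have := Finset.card_le_card hsub
      rw [card_fiber_zsF] at this
      have hSle : S.card ≤ m := by
        have := Finset.card_le_univ S
        simpa using this
      rw [Finset.card_compl, Fintype.card_fin] at this
      calc ((s.filter (fun v => f v = S)).image (fun v => v.1)).card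
          ≤ α ^ (m - (m - S.card)) := this
        _ = α ^ S.card := by congr 1; omega
  calc ∑ S ∈ 𝒮, (s.filter (fun v => f v = S)).card
      ≤ ∑ S ∈ 𝒮, wS α S := Finset.sum_le_sum hfiber
    _ ≤ ∑ S ∈ univ.filter (fun S : Finset (Fin m) => m/2 < S.card), wS α S := by
        apply intersecting_bound hα hodd
        · intro S hS
          rw [h𝒮, Finset.mem_image] at hS
          obtain ⟨v, _, rfl⟩ := hS
          rw [hf]
          rw [← Finset.card_pos, Finset.card_compl, Fintype.card_fin]
          have hne : zsF v.1 ≠ univ := by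
            intro h
            apply v.2.1
            funext i
            have : i ∈ zsF v.1 := h ▸ mem_univ i
            rw [mem_zsF] at this
            exact this
          have hlt : (zsF v.1).card < m := by
            rcases Nat.lt_or_ge (zsF v.1).card m with h | h
            · exact h
            · exfalso
              apply hne
              apply Finset.eq_univ_of_card
              have := card_zsF_le v.1
              simp only [Finset.card_univ, Fintype.card_fin]
              omega
          omega
        · intro S hS T hT hST
          rw [h𝒮, Finset.mem_image] at hS hT
          obtain ⟨v, hv, rfl⟩ := hS
          obtain ⟨w, hw, rfl⟩ := hT
          have hvw : v ≠ w := fun h => hST (h ▸ rfl)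
          obtain ⟨-, i, hi1, hi2⟩ := hs hv hw hvw
          refine ⟨i, ?_⟩
          rw [Finset.mem_inter, hf]
          simp only [Finset.mem_compl, mem_zsF]
          exact ⟨hi1, hi2⟩
    _ = _ := sum_Big hα hodd (by omega)

lemma cliqueNum_G' (hα : 1 ≤ α) (hodd : Odd m) (hm : 3 ≤ m) :
    (G' m α).cliqueNum = (∑ i ∈ Finset.range (m/2+1), m.choose i * α ^ (m - i)) - 1 := by
  apply le_antisymm
  · obtain ⟨s, hs⟩ := (G' m α).exists_isNClique_cliqueNum
    rw [← hs.2]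
    exact clique_card_le hα hodd hm s hs.1
  · rw [← card_KClq hα hodd]
    exact SimpleGraph.IsClique.card_le_cliqueNum (tc := KClq_isClique hodd)

lemma card_fiber_subtype (Z : Finset (Fin m)) :
    Fintype.card {β : Fin m → Fin (α+1) // zsF β = Z} = α ^ (m - Z.card) := by
  rw [Fintype.card_subtype, card_fiber_zsF]

/-- a chosen injection from the fiber over `Z` into functions on `Z` -/
noncomputable def encZ (hα : 1 ≤ α) (Z : Finset (Fin m)) (hZ : m - Z.card ≤ Z.card) :
    {β : Fin m → Fin (α+1) // zsF β = Z} → ({i // i ∈ Z} → Fin α) :=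
  (Function.Embedding.nonempty_of_card_le (by
    rw [card_fiber_subtype, Fintype.card_fun, Fintype.card_coe, Fintype.card_fin]
    exact Nat.pow_le_pow_right hα hZ)).some

lemma encZ_inj (hα : 1 ≤ α) (Z : Finset (Fin m)) (hZ : m - Z.card ≤ Z.card) :
    Function.Injective (encZ hα Z hZ) := by
  unfold encZ
  apply Function.Embedding.injective

/-- the recoloring vertex for a "big zero-set" vertex -/
noncomputable def colT (hα : 1 ≤ α) (v : GV m α)
    (hv : m - (zsF v.1).card ≤ (zsF v.1).card) : Fin m → Fin (α+1) := fun i =>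
  if hi : i ∈ zsF v.1 then
    (encZ hα (zsF v.1) hv ⟨v.1, rfl⟩ ⟨i, hi⟩).castSucc
  else Fin.last α

lemma zsF_colT (hα : 1 ≤ α) (v : GV m α) (hv : m - (zsF v.1).card ≤ (zsF v.1).card) :
    zsF (colT hα v hv) = (zsF v.1)ᶜ := by
  ext i
  rw [mem_zsF, Finset.mem_compl, colT]
  by_cases hi : i ∈ zsF v.1
  · rw [dif_pos hi]
    simp only [hi, not_true_eq_false, iff_false]
    exact Fin.ne_last_of_lt (Fin.castSucc_lt_last _)
  · rw [dif_neg hi]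
    simp [hi]

lemma encZ_congr (hα : 1 ≤ α) {Z Z' : Finset (Fin m)} (h : Z = Z')
    (hZ : m - Z.card ≤ Z.card) (β : Fin m → Fin (α+1))
    (hβ : zsF β = Z) (i : Fin m) (hi : i ∈ Z) :
    encZ hα Z hZ ⟨β, hβ⟩ ⟨i, hi⟩
      = encZ hα Z' (h ▸ hZ) ⟨β, h ▸ hβ⟩ ⟨i, h ▸ hi⟩ := by
  subst h; rfl

lemma colT_inj (hα : 1 ≤ α) {v w : GV m α}
    (hv : m - (zsF v.1).card ≤ (zsF v.1).card)
    (hw : m - (zsF w.1).card ≤ (zsF w.1).card)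
    (hzs : zsF w.1 = zsF v.1) (h : colT hα v hv = colT hα w hw) : v = w := by
  have key : (⟨v.1, rfl⟩ : {β : Fin m → Fin (α+1) // zsF β = zsF v.1})
      = ⟨w.1, hzs⟩ := by
    apply encZ_inj hα (zsF v.1) hv
    funext j
    obtain ⟨i, hi⟩ := j
    have h1 := congrFun h i
    have hi' : i ∈ zsF w.1 := hzs ▸ hi
    rw [colT, colT, dif_pos hi, dif_pos hi'] at h1
    have h2 := Fin.castSucc_injective _ h1
    rw [h2]
    exact encZ_congr hα hzs hw w.1 rfl i hi'
  have hval : v.1 = w.1 := congrArg (fun x : {β : Fin m → Fin (α+1) // zsF β = zsF v.1} => x.1) key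
  exact Subtype.ext hval

/-- color type -/
abbrev CT (m α : ℕ) := {β : Fin m → Fin (α+1) // (zsF β).card ≤ m/2 ∧ β ≠ zeroT m α}

lemma card_CT (hα : 1 ≤ α) :
    Fintype.card (CT m α)
      = (∑ i ∈ Finset.range (m/2+1), m.choose i * α ^ (m - i)) - 1 := by
  rw [← count_N]
  rw [Fintype.card_subtype]
  have hzmem : zeroT m α ∈ (univ.filter fun β : Fin m → Fin (α+1) => (zsF β).card ≤ m/2) := by
    rw [mem_filter]
    exact ⟨mem_univ _, by rw [zsF_zeroT hα]; simp⟩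
  rw [← Finset.card_erase_of_mem hzmem]
  congr 1
  ext β
  rw [Finset.mem_erase, mem_filter, mem_filter]
  tauto

lemma zsF_ne_univ (v : GV m α) : zsF v.1 ≠ univ := by
  intro h
  apply v.2.1
  funext i
  have : i ∈ zsF v.1 := h ▸ mem_univ i
  exact mem_zsF.1 this

lemma card_zsF_lt (v : GV m α) : (zsF v.1).card < m := by
  rcases Nat.lt_or_ge (zsF v.1).card m with h | h
  · exact h
  · exfalso
    apply zsF_ne_univ v
    apply Finset.eq_univ_of_card
    have := card_zsF_le v.1
    simp only [Finset.card_univ, Fintype.card_fin]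
    omega

lemma big_fact (hodd : Odd m) {v : GV m α} (h : ¬ (zsF v.1).card ≤ m/2) :
    m - (zsF v.1).card ≤ (zsF v.1).card := by
  have := card_zsF_le v.1
  have hm2 := Nat.odd_iff.1 hodd
  omega

lemma colT_card (hodd : Odd m) (hα : 1 ≤ α) {v : GV m α}
    (h : ¬ (zsF v.1).card ≤ m/2) (hv : m - (zsF v.1).card ≤ (zsF v.1).card) :
    (zsF (colT hα v hv)).card ≤ m/2 := by
  rw [zsF_colT, Finset.card_compl, Fintype.card_fin]
  have hm2 := Nat.odd_iff.1 hodd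
  have := card_zsF_le v.1
  omega

lemma last_ne_zero (hα : 1 ≤ α) : (Fin.last α : Fin (α+1)) ≠ 0 := by
  intro h
  have := congrArg Fin.val h
  rw [Fin.val_last, Fin.val_zero] at this
  omega

lemma colT_ne_zeroT (hα : 1 ≤ α) {v : GV m α}
    (hv : m - (zsF v.1).card ≤ (zsF v.1).card) :
    colT hα v hv ≠ zeroT m α := by
  have hne : ((zsF v.1)ᶜ : Finset (Fin m)).Nonempty := by
    rw [← Finset.card_pos, Finset.card_compl, Fintype.card_fin]
    have := card_zsF_lt v
    omega
  obtain ⟨i, hi⟩ := hne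
  intro hcol
  have := congrFun hcol i
  rw [colT, dif_neg (Finset.mem_compl.1 hi)] at this
  exact last_ne_zero hα (this.trans rfl)

/-- the coloring of the model graph -/
noncomputable def theColoring (hα : 1 ≤ α) (hodd : Odd m) :
    (G' m α).Coloring (CT m α) :=
  SimpleGraph.Coloring.mk
    (fun v => if h : (zsF v.1).card ≤ m/2 then ⟨v.1, h, v.2.2⟩
      else ⟨colT hα v (big_fact hodd h),
        colT_card hodd hα h (big_fact hodd h),
        colT_ne_zeroT hα (big_fact hodd h)⟩)
    (by
      rintro v w ⟨hne, i0, hv0, hw0⟩ heq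
      by_cases hv : (zsF v.1).card ≤ m/2 <;> by_cases hw : (zsF w.1).card ≤ m/2
      · rw [dif_pos hv, dif_pos hw] at heq
        exact hne (Subtype.ext (congrArg (fun x : CT m α => x.1) heq))
      · rw [dif_pos hv, dif_neg hw] at heq
        have h1 : v.1 = colT hα w (big_fact hodd hw) :=
          congrArg (fun x : CT m α => x.1) heq
        have h2 : zsF v.1 = (zsF w.1)ᶜ := by rw [h1, zsF_colT]
        have hi0 : i0 ∉ zsF v.1 := fun h => hv0 (mem_zsF.1 h)
        rw [h2, Finset.mem_compl, not_not] at hi0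
        exact hw0 (mem_zsF.1 hi0)
      · rw [dif_neg hv, dif_pos hw] at heq
        have h1 : colT hα v (big_fact hodd hv) = w.1 :=
          congrArg (fun x : CT m α => x.1) heq
        have h2 : zsF w.1 = (zsF v.1)ᶜ := by rw [← h1, zsF_colT]
        have hi0 : i0 ∉ zsF w.1 := fun h => hw0 (mem_zsF.1 h)
        rw [h2, Finset.mem_compl, not_not] at hi0
        exact hv0 (mem_zsF.1 hi0)
      · rw [dif_neg hv, dif_neg hw] at heq
        have h1 : colT hα v (big_fact hodd hv) = colT hα w (big_fact hodd hw) :=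
          congrArg (fun x : CT m α => x.1) heq
        have h2 : zsF w.1 = zsF v.1 := by
          apply compl_injective
          rw [← zsF_colT hα v (big_fact hodd hv), ← zsF_colT hα w (big_fact hodd hw), h1]
        exact hne (colT_inj hα _ _ h2 h1))

lemma chromaticNumber_G' (hα : 1 ≤ α) (hodd : Odd m) (hm : 3 ≤ m) :
    (G' m α).chromaticNumber
      = (((∑ i ∈ Finset.range (m/2+1), m.choose i * α ^ (m - i)) - 1 : ℕ) : ℕ∞) := by
  apply le_antisymm
  · have hcol := (theColoring hα hodd).colorable
    rw [card_CT hα] at hcol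
    exact hcol.chromaticNumber_le
  · have := (KClq_isClique hodd (m := m) (α := α)).card_le_chromaticNumber
    rwa [card_KClq hα hodd] at this


lemma dIdeal_congr {n : ℕ} [NeZero n] {d e : ℕ} (h : d = e) (hd : d ∣ n) :
    dIdeal hd = dIdeal (h ▸ hd) := by subst h; rfl

lemma isNClique_map {V W : Type*} {G : SimpleGraph V} {H : SimpleGraph W} [DecidableEq W]
    (e : G ≃g H) {k : ℕ} {s : Finset V} (h : G.IsNClique k s) :
    H.IsNClique k (s.image e) := by
  constructor
  · rintro x hx y hy hxy
    simp only [Finset.coe_image, Set.mem_image, Finset.mem_coe] at hx hy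
    obtain ⟨a, ha, rfl⟩ := hx
    obtain ⟨b, hb, rfl⟩ := hy
    have hab : a ≠ b := fun hh => hxy (by rw [hh])
    exact e.map_rel_iff.2 (h.1 ha hb hab)
  · rw [Finset.card_image_of_injective _ e.injective, h.2]

lemma iso_cliqueNum {V W : Type*} {G : SimpleGraph V} {H : SimpleGraph W}
    (e : G ≃g H) : G.cliqueNum = H.cliqueNum := by
  classical
  unfold SimpleGraph.cliqueNum
  congr 1
  ext k
  simp only [Set.mem_setOf_eq]
  exact ⟨fun ⟨s, hs⟩ => ⟨s.image e, isNClique_map e hs⟩,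
    fun ⟨s, hs⟩ => ⟨s.image e.symm, isNClique_map e.symm hs⟩⟩

lemma iso_chromaticNumber {V W : Type*} {G : SimpleGraph V} {H : SimpleGraph W}
    (e : G ≃g H) : G.chromaticNumber = H.chromaticNumber := by
  have h : setOf G.Colorable = setOf H.Colorable := by
    ext nn
    exact ⟨fun h => SimpleGraph.Colorable.of_hom e.symm.toHom h,
      fun h => SimpleGraph.Colorable.of_hom e.toHom h⟩
  rw [SimpleGraph.chromaticNumber_eq_biInf, SimpleGraph.chromaticNumber_eq_biInf]
  exact congrArg (fun s : Set ℕ => ⨅ k ∈ s, (k : ℕ∞)) h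

end Stmt8Aux

open Stmt8Aux in
theorem stmt8 (m α : ℕ) (hm : 3 ≤ m) (hodd : Odd m) (hα : 1 ≤ α)
    (p : Fin m → ℕ) (hp : ∀ i, (p i).Prime) (hinj : Function.Injective p)
    (n : ℕ) (hn : n = ∏ i, p i ^ α) :
    (interGraph (ZMod n)).cliqueNum =
      (∑ i ∈ Finset.range (m / 2 + 1), m.choose i * α ^ (m - i)) - 1 ∧
    (interGraph (ZMod n)).chromaticNumber =
      (((∑ i ∈ Finset.range (m / 2 + 1), m.choose i * α ^ (m - i)) - 1 : ℕ) : ℕ∞) := by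
  subst hn
  haveI : NeZero (∏ i, p i ^ α) :=
    ⟨by
      rw [Finset.prod_ne_zero_iff]
      exact fun i _ => pow_ne_zero _ (hp i).pos.ne'⟩
  set nn := ∏ i, p i ^ α with hnn
  have hgconst : gdiv p (fun _ => α) = nn := rfl
  have hdvd : ∀ β : Fin m → Fin (α+1), gdiv p (fun i => (β i : ℕ)) ∣ nn :=
    fun β => hgconst ▸ gdiv_dvd (fun i => Fin.is_le _)
  have hvmap_last : gdiv p (fun i => ((lastT m α) i : ℕ)) = nn := by
    rw [show (fun i => ((lastT m α) i : ℕ)) = fun _ : Fin m => α by funext i; simp [lastT]]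
    exact hgconst
  have hvmap_zero : gdiv p (fun i => ((zeroT m α) i : ℕ)) = 1 := by
    rw [show (fun i => ((zeroT m α) i : ℕ)) = fun _ : Fin m => 0 by funext i; simp [zeroT]]
    rw [gdiv]
    simp
  have hFinj : ∀ β γ : Fin m → Fin (α+1),
      dIdeal (hdvd β) = dIdeal (hdvd γ) → β = γ := by
    intro β γ h
    have := gdiv_inj hp hinj (dIdeal_inj _ _ h)
    funext i
    exact Fin.ext (congrFun this i)
  have hFbot : ∀ β : Fin m → Fin (α+1), dIdeal (hdvd β) = ⊥ ↔ β = lastT m α := by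
    intro β
    constructor
    · intro h
      rw [← dIdeal_n (n := nn)] at h
      have h2 : gdiv p (fun i => (β i : ℕ)) = nn := dIdeal_inj _ _ h
      rw [← hvmap_last] at h2
      have h3 := gdiv_inj hp hinj h2
      funext i
      exact Fin.ext (congrFun h3 i)
    · rintro rfl
      rw [dIdeal_congr hvmap_last]
      exact dIdeal_n
  have hFtop : ∀ β : Fin m → Fin (α+1), dIdeal (hdvd β) = ⊤ ↔ β = zeroT m α := by
    intro β
    constructor
    · intro h
      rw [← dIdeal_one (n := nn)] at h
      have h2 : gdiv p (fun i => (β i : ℕ)) = 1 := dIdeal_inj _ _ h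
      have h3 := gdiv_inj hp hinj (h2.trans hvmap_zero.symm)
      funext i
      exact Fin.ext (congrFun h3 i)
    · rintro rfl
      rw [dIdeal_congr hvmap_zero]
      exact dIdeal_one
  have hFinf : ∀ β γ : Fin m → Fin (α+1),
      (dIdeal (hdvd β) ⊓ dIdeal (hdvd γ) = ⊥)
        ↔ ∀ i, β i = Fin.last α ∨ γ i = Fin.last α := by
    intro β γ
    rw [dIdeal_inf]
    rw [dIdeal_congr (gdiv_lcm hp hinj _ _)]
    constructor
    · intro h
      rw [← dIdeal_n (n := nn)] at h
      have h2 := dIdeal_inj _ _ h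
      rw [← hvmap_last] at h2
      have h3 := gdiv_inj hp hinj h2
      intro i
      have h4 := congrFun h3 i
      simp only [lastT, Fin.val_last] at h4
      have hb : (β i : ℕ) ≤ α := Fin.is_le _
      have hc : (γ i : ℕ) ≤ α := Fin.is_le _
      have h5 : (β i : ℕ) = α ∨ (γ i : ℕ) = α := by omega
      rcases h5 with h' | h'
      · exact Or.inl (Fin.ext (by rw [h', Fin.val_last]))
      · exact Or.inr (Fin.ext (by rw [h', Fin.val_last]))
    · intro h
      have heq : gdiv p (fun i => max (β i : ℕ) (γ i : ℕ)) = nn := by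
        rw [← hgconst]
        congr 1
        funext i
        rcases h i with h' | h'
        · rw [h']
          simp [Nat.max_eq_left (Fin.is_le _)]
        · rw [h']
          simp [Nat.max_eq_right (Fin.is_le _)]
      rw [dIdeal_congr heq]
      exact dIdeal_n
  have hFsurj : ∀ I : Ideal (ZMod nn), ∃ β : Fin m → Fin (α+1), dIdeal (hdvd β) = I := by
    intro I
    obtain ⟨d, hd, rfl⟩ := dIdeal_surj I
    obtain ⟨β', hβ'le, hβ'⟩ := gdiv_surj hp hinj (hgconst ▸ hd)
    refine ⟨fun i => ⟨β' i, Nat.lt_succ_of_le (hβ'le i)⟩, ?_⟩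
    have heq : gdiv p (fun i => ((⟨β' i, Nat.lt_succ_of_le (hβ'le i)⟩ : Fin (α+1)) : ℕ)) = d := hβ'
    exact dIdeal_congr heq _
  -- the vertex bijection
  set Φ : GV m α → {I : Ideal (ZMod nn) // I ≠ ⊥ ∧ I ≠ ⊤} :=
    fun v => ⟨dIdeal (hdvd v.1),
      fun h => v.2.1 ((hFbot v.1).1 h),
      fun h => v.2.2 ((hFtop v.1).1 h)⟩ with hΦ
  have hΦinj : Function.Injective Φ := by
    intro v w h
    exact Subtype.ext (hFinj _ _ (congrArg Subtype.val h))
  have hΦsurj : Function.Surjective Φ := by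
    rintro ⟨I, hb, ht⟩
    obtain ⟨β, hβ⟩ := hFsurj I
    refine ⟨⟨β, fun h => hb ?_, fun h => ht ?_⟩, Subtype.ext hβ⟩
    · rw [← hβ]
      exact (hFbot β).2 h
    · rw [← hβ]
      exact (hFtop β).2 h
  have theIso : (G' m α) ≃g interGraph (ZMod nn) := by
    refine ⟨Equiv.ofBijective Φ ⟨hΦinj, hΦsurj⟩, ?_⟩
    intro a b
    show (interGraph (ZMod nn)).Adj (Φ a) (Φ b) ↔ (G' m α).Adj a b
    show (Φ a ≠ Φ b ∧ (Φ a).1 ⊓ (Φ b).1 ≠ ⊥) ↔ _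
    constructor
    · rintro ⟨h1, h2⟩
      refine ⟨fun h => h1 (h ▸ rfl), ?_⟩
      have hnall : ¬ ∀ i, a.1 i = Fin.last α ∨ b.1 i = Fin.last α :=
        fun hall => h2 ((hFinf a.1 b.1).2 hall)
      push_neg at hnall
      have this := hnall
      obtain ⟨i, hi1, hi2⟩ := this
      exact ⟨i, hi1, hi2⟩
    · rintro ⟨h1, i, hi1, hi2⟩
      refine ⟨fun h => h1 (hΦinj h), fun h => ?_⟩
      rcases (hFinf a.1 b.1).1 h i with h' | h'
      · exact hi1 h'
      · exact hi2 h'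
  constructor
  · rw [← iso_cliqueNum theIso]
    exact cliqueNum_G' hα hodd hm
  · rw [← iso_chromaticNumber theIso]
    exact chromaticNumber_G' hα hodd hm
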